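/- arXiv:1712.05864 — 2 statements merged into one kernel-verified Lean document; each statement's English description precedes it below -/
import Mathlib

section
/- Singular value bounds for solutions of Sylvester equations with spectra in opposite disks and a right-hand side with geometrically decaying singular values: Let E = {z ∈ ℂ : |z − z₀| ≤ η} with z₀, η ∈ ℝ and 0 < η < z₀, let φ = √(z₀² − η²), and let μ₁ = (z₀ + φ)/(z₀ − φ). Let X ∈ ℂ^{m×n} (m ≥ n) satisfy AX − XB = F, where A and B are normal matrices with all eigenvalues of A in E and all eigenvalues of B in −E. Suppose that for some constant K ≥ 1 and all 0 ≤ j < n, σ_{j+1}(F) ≤ K μ₁^{−j} ‖F‖₂. Then for every triangular number t = k(k+1)/2 with 1 ≤ t < n, σ_{t+1}(X) ≤ K · ((z₀ + η)/(z₀ − η)) · ((3/2)√t + 1) · μ₁^{−(√(8t+1) − 1)/2} · ‖X‖₂. -/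
/-- The spectral norm of a complex matrix. -/
noncomputable def specNorm {m n : ℕ} (M : Matrix (Fin m) (Fin n) ℂ) : ℝ :=
  ‖LinearMap.toContinuousLinearMap (Matrix.toEuclideanLin M)‖

/-- The `j`-th largest singular value of a complex matrix (for `j ≥ 1`), via the
Eckart–Young characterization `σ_j(M) = min {‖M - N‖₂ : rank N < j}`. -/
noncomputable def singularValue {m n : ℕ} (M : Matrix (Fin m) (Fin n) ℂ) (j : ℕ) : ℝ :=
  sInf ((fun N : Matrix (Fin m) (Fin n) ℂ => specNorm (M - N)) '' {N | N.rank < j})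

open scoped Matrix.Norms.L2Operator

noncomputable instance matCSA (m : ℕ) : CStarAlgebra (Matrix (Fin m) (Fin m) ℂ) := { }

lemma specNorm_eq {m n : ℕ} (M : Matrix (Fin m) (Fin n) ℂ) : specNorm M = ‖M‖ := by
  rw [Matrix.l2_opNorm_def]; rfl

lemma sv_le {m n : ℕ} (M N : Matrix (Fin m) (Fin n) ℂ) {j : ℕ} (h : N.rank < j) :
    singularValue M j ≤ ‖M - N‖ := by
  rw [← specNorm_eq]
  exact csInf_le ⟨0, by rintro y ⟨N', -, rfl⟩; dsimp; rw [specNorm_eq]; positivity⟩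
    ⟨N, h, rfl⟩

lemma sv_exists {m n : ℕ} (M : Matrix (Fin m) (Fin n) ℂ) (j : ℕ) (hj : 0 < j) {ε : ℝ}
    (hε : 0 < ε) :
    ∃ N : Matrix (Fin m) (Fin n) ℂ, N.rank < j ∧ ‖M - N‖ < singularValue M j + ε := by
  have hne : ((fun N : Matrix (Fin m) (Fin n) ℂ => specNorm (M - N)) ''
      {N | N.rank < j}).Nonempty :=
    ⟨_, ⟨0, by simpa [Matrix.rank_zero] using hj, rfl⟩⟩
  obtain ⟨y, ⟨N, hN, rfl⟩, hy⟩ := exists_lt_of_csInf_lt hne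
    (show sInf _ < singularValue M j + ε from lt_add_of_pos_right _ hε)
  exact ⟨N, hN, by simpa [specNorm_eq] using hy⟩

lemma matrank_add_le {m n : ℕ} (M N : Matrix (Fin m) (Fin n) ℂ) :
    (M + N).rank ≤ M.rank + N.rank := by
  classical
  rw [Matrix.rank, Matrix.rank, Matrix.rank, Matrix.mulVecLin_add]
  refine le_trans (Submodule.finrank_mono ?_)
    (Submodule.finrank_add_le_finrank_add_finrank _ _)
  rintro x ⟨y, rfl⟩
  exact Submodule.add_mem_sup (LinearMap.mem_range_self _ y) (LinearMap.mem_range_self _ y)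

lemma matrank_sum_le {ι : Type*} {m n : ℕ} (s : Finset ι) (f : ι → Matrix (Fin m) (Fin n) ℂ)
    (r : ι → ℕ) (h : ∀ i ∈ s, (f i).rank ≤ r i) :
    (∑ i ∈ s, f i).rank ≤ ∑ i ∈ s, r i := by
  classical
  induction s using Finset.cons_induction with
  | empty => simp [Matrix.rank_zero]
  | cons a s ha ih =>
    rw [Finset.sum_cons, Finset.sum_cons]
    exact le_trans (matrank_add_le _ _)
      (add_le_add (h a (Finset.mem_cons_self a s)) (ih fun i hi => h i (Finset.mem_cons_of_mem hi)))

lemma mat_cancel {m n : ℕ} {Ap : Matrix (Fin m) (Fin m) ℂ} {Bm : Matrix (Fin n) (Fin n) ℂ}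
    (hA : IsUnit Ap) (hB : IsUnit Bm) {Y Z : Matrix (Fin m) (Fin n) ℂ}
    (h : Ap * Y * Bm = Ap * Z * Bm) : Y = Z := by
  have hA' := (Matrix.isUnit_iff_isUnit_det _).mp hA
  have hB' := (Matrix.isUnit_iff_isUnit_det _).mp hB
  have e : ∀ W : Matrix (Fin m) (Fin n) ℂ, Ap⁻¹ * (Ap * W * Bm) * Bm⁻¹ = W := by
    intro W
    calc Ap⁻¹ * (Ap * W * Bm) * Bm⁻¹ = (Ap⁻¹ * Ap) * W * (Bm * Bm⁻¹) := by
          simp only [Matrix.mul_assoc]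
      _ = W := by
          rw [Matrix.nonsing_inv_mul _ hA', Matrix.mul_nonsing_inv _ hB', Matrix.one_mul,
            Matrix.mul_one]
  rw [← e Y, h, e Z]

lemma mat_telescope {m n : ℕ} (C : Matrix (Fin m) (Fin m) ℂ) (D : Matrix (Fin n) (Fin n) ℂ)
    (X : Matrix (Fin m) (Fin n) ℂ) (k : ℕ) :
    X = C ^ k * X * D ^ k + ∑ i ∈ Finset.range k, C ^ i * (X - C * X * D) * D ^ i := by
  induction k with
  | zero => simp
  | succ k ih =>
    rw [Finset.sum_range_succ, ← add_assoc]
    have key : C ^ (k + 1) * X * D ^ (k + 1) + C ^ k * (X - C * X * D) * D ^ k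
        = C ^ k * X * D ^ k := by
      rw [pow_succ C, pow_succ' D]
      simp only [Matrix.mul_sub, Matrix.sub_mul, Matrix.mul_assoc]
      abel
    calc X = C ^ k * X * D ^ k + ∑ i ∈ Finset.range k, C ^ i * (X - C * X * D) * D ^ i := ih
      _ = _ := by rw [← key]; abel

lemma gauss_sum (k : ℕ) : ∑ i ∈ Finset.range k, (k - i) = k * (k + 1) / 2 := by
  induction k with
  | zero => simp
  | succ k ih =>
    rw [Finset.sum_range_succ]
    have h1 : ∀ i ∈ Finset.range k, k + 1 - i = (k - i) + 1 := fun i hi => by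
      have := Finset.mem_range.mp hi; omega
    rw [Finset.sum_congr rfl h1, Finset.sum_add_distrib, Finset.sum_const, Finset.card_range, ih]
    have h2 : 2 ∣ k * (k + 1) := (Nat.even_mul_succ_self k).two_dvd
    have h4 : (k + 1) * (k + 1 + 1) = k * (k + 1) + 2 * (k + 1) := by ring
    simp only [smul_eq_mul]
    omega

lemma disk_lemma {z₀ η φ : ℝ} (hη : 0 < η) (hz : η < z₀) (hφ0 : 0 < φ)
    (hφ2 : φ ^ 2 = z₀ ^ 2 - η ^ 2) {w : ℂ} (hw : ‖w - (z₀ : ℂ)‖ ≤ η) :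
    ‖w - (φ : ℂ)‖ ≤ Real.sqrt ((z₀ - φ) / (z₀ + φ)) * ‖w + (φ : ℂ)‖ ∧
      z₀ + φ - η ≤ ‖w + (φ : ℂ)‖ := by
  have hφz : φ < z₀ := by nlinarith
  have hsum : 0 < z₀ + φ := by linarith
  have hq0 : 0 ≤ (z₀ - φ) / (z₀ + φ) := div_nonneg (by linarith) hsum.le
  have hsq : ∀ u : ℂ, ‖u‖ ^ 2 = u.re ^ 2 + u.im ^ 2 := fun u => by
    rw [Complex.sq_norm, Complex.normSq_apply]; ring
  have hwE : (w.re - z₀) ^ 2 + w.im ^ 2 ≤ η ^ 2 := by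
    have h1 : ‖w - (z₀ : ℂ)‖ ^ 2 ≤ η ^ 2 := pow_le_pow_left₀ (norm_nonneg _) hw 2
    rw [hsq] at h1
    simpa using h1
  constructor
  · have ha : ‖w - (φ : ℂ)‖ ^ 2 ≤ (Real.sqrt ((z₀ - φ) / (z₀ + φ)) * ‖w + (φ : ℂ)‖) ^ 2 := by
      rw [mul_pow, Real.sq_sqrt hq0, hsq, hsq]
      simp only [Complex.add_re, Complex.sub_re, Complex.add_im, Complex.sub_im,
        Complex.ofReal_re, Complex.ofReal_im, sub_zero, add_zero]
      rw [div_mul_eq_mul_div, le_div_iff₀ hsum]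
      nlinarith [mul_nonneg hφ0.le (sub_nonneg.mpr hwE)]
    exact le_of_pow_le_pow_left₀ two_ne_zero
      (mul_nonneg (Real.sqrt_nonneg _) (norm_nonneg _)) ha
  · have h1 : ‖((z₀ + φ : ℝ) : ℂ)‖ ≤ ‖w + (φ : ℂ)‖ + ‖w - (z₀ : ℂ)‖ := by
      calc ‖((z₀ + φ : ℝ) : ℂ)‖ = ‖(w + (φ : ℂ)) - (w - (z₀ : ℂ))‖ := by
            congr 1; push_cast; ring
        _ ≤ _ := norm_sub_le _ _
    rw [Complex.norm_real, Real.norm_eq_abs, abs_of_pos hsum] at h1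
    linarith

lemma cfc_add_scalar {m : ℕ} (M : Matrix (Fin m) (Fin m) ℂ) [IsStarNormal M] (c : ℂ) :
    cfc (fun z : ℂ => z + c) M = M + algebraMap ℂ (Matrix (Fin m) (Fin m) ℂ) c := by
  rw [show (fun z : ℂ => z + c) = fun z : ℂ => id z + (fun _ : ℂ => c) z from rfl,
    cfc_add M id _ continuousOn_id continuousOn_const, cfc_id ℂ M, cfc_const c M]

lemma cfc_sub_scalar {m : ℕ} (M : Matrix (Fin m) (Fin m) ℂ) [IsStarNormal M] (c : ℂ) :
    cfc (fun z : ℂ => z - c) M = M - algebraMap ℂ (Matrix (Fin m) (Fin m) ℂ) c := by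
  have h1 : cfc (fun z : ℂ => z + (-c)) M = M + algebraMap ℂ (Matrix (Fin m) (Fin m) ℂ) (-c) :=
    cfc_add_scalar M (-c)
  simp only [← sub_eq_add_neg, map_neg] at h1
  exact h1

set_option maxHeartbeats 2000000 in
/-- **Singular value bounds for Sylvester equations with spectra in opposite disks and a
right-hand side with geometrically decaying singular values.**
If `AX - XB = F` with `A, B` normal, `λ(A) ⊆ E = {z : |z - z₀| ≤ η}`, `λ(B) ⊆ -E`
(`0 < η < z₀`), `φ = √(z₀² - η²)`, `μ₁ = (z₀ + φ)/(z₀ - φ)`, and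
`σ_{j+1}(F) ≤ K μ₁^{-j} ‖F‖₂` for all `0 ≤ j < n` with `K ≥ 1`, then for each triangular
number `t = k(k+1)/2` with `1 ≤ t < n`,
`σ_{t+1}(X) ≤ K ((z₀+η)/(z₀-η)) ((3/2)√t + 1) μ₁^{-(√(8t+1)-1)/2} ‖X‖₂`. -/
theorem sylvester_singular_values_opposite_disks {m n : ℕ} (hmn : n ≤ m)
    (z₀ η : ℝ) (hη : 0 < η) (hz : η < z₀)
    (φ : ℝ) (hφ : φ = Real.sqrt (z₀ ^ 2 - η ^ 2))
    (μ₁ : ℝ) (hμ : μ₁ = (z₀ + φ) / (z₀ - φ))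
    (A : Matrix (Fin m) (Fin m) ℂ) (B : Matrix (Fin n) (Fin n) ℂ)
    (hA : A * A.conjTranspose = A.conjTranspose * A)
    (hB : B * B.conjTranspose = B.conjTranspose * B)
    (hspecA : spectrum ℂ A ⊆ {z : ℂ | ‖z - (z₀ : ℂ)‖ ≤ η})
    (hspecB : spectrum ℂ B ⊆ {z : ℂ | ‖-z - (z₀ : ℂ)‖ ≤ η})
    (F X : Matrix (Fin m) (Fin n) ℂ) (hX : A * X - X * B = F)
    (K : ℝ) (hK : 1 ≤ K)
    (hF : ∀ j < n, singularValue F (j + 1) ≤ K * (μ₁ ^ j)⁻¹ * specNorm F)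
    (k t : ℕ) (htk : t = k * (k + 1) / 2) (ht1 : 1 ≤ t) (htn : t < n) :
    singularValue X (t + 1) ≤
      K * ((z₀ + η) / (z₀ - η)) * ((3 / 2) * Real.sqrt t + 1) *
        μ₁ ^ (-(Real.sqrt (8 * (t : ℝ) + 1) - 1) / 2) * specNorm X := by
  classical
  -- basic scalar facts
  have hz0 : (0 : ℝ) < z₀ := lt_trans hη hz
  have hφ2 : φ ^ 2 = z₀ ^ 2 - η ^ 2 := by rw [hφ]; exact Real.sq_sqrt (by nlinarith)
  have hφnn : 0 ≤ φ := hφ ▸ Real.sqrt_nonneg _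
  have hφ0 : 0 < φ := lt_of_le_of_ne hφnn (by intro h; nlinarith)
  have hφz : φ < z₀ := by nlinarith
  have hδ : 0 < z₀ + φ - η := by linarith
  have hμ0 : 0 < μ₁ := by rw [hμ]; exact div_pos (by linarith) (by linarith)
  have hμ1 : 1 ≤ μ₁ := by rw [hμ, le_div_iff₀ (by linarith)]; linarith
  set δ : ℝ := z₀ + φ - η with hδdef
  set q : ℝ := (z₀ - φ) / (z₀ + φ) with hqdef
  have hq0 : 0 ≤ q := div_nonneg (by linarith) (by linarith)
  have hqμ : q = μ₁⁻¹ := by rw [hμ, inv_div]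
  set ν : ℝ := Real.sqrt q with hνdef
  have hν0 : 0 ≤ ν := Real.sqrt_nonneg _
  have hν2 : ν ^ 2 = μ₁⁻¹ := by rw [hνdef, Real.sq_sqrt hq0, hqμ]
  -- nat facts
  have h2dvd : 2 ∣ k * (k + 1) := (Nat.even_mul_succ_self k).two_dvd
  have h2t : 2 * t = k * (k + 1) := by omega
  have hk1 : 1 ≤ k := by
    rcases Nat.eq_zero_or_pos k with h | h
    · subst h; simp at h2t; omega
    · exact h
  have hkt : k ≤ t := by
    have h5 : k * 2 ≤ k * (k + 1) := Nat.mul_le_mul_left k (by omega)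
    omega
  -- normality
  haveI hAnrm : IsStarNormal A :=
    ⟨by simpa [Matrix.star_eq_conjTranspose, Commute, SemiconjBy] using hA.symm⟩
  haveI hBnrm : IsStarNormal B :=
    ⟨by simpa [Matrix.star_eq_conjTranspose, Commute, SemiconjBy] using hB.symm⟩
  -- spectral geometry for A
  have hAdisk : ∀ z ∈ spectrum ℂ A,
      ‖z - (φ : ℂ)‖ ≤ ν * ‖z + (φ : ℂ)‖ ∧ δ ≤ ‖z + (φ : ℂ)‖ := by
    intro z hzs
    have hw : ‖z - (z₀ : ℂ)‖ ≤ η := by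
      have := hspecA hzs; simpa using this
    exact disk_lemma hη hz hφ0 hφ2 hw
  have hBdisk : ∀ z ∈ spectrum ℂ B,
      ‖z + (φ : ℂ)‖ ≤ ν * ‖z - (φ : ℂ)‖ ∧ δ ≤ ‖z - (φ : ℂ)‖ := by
    intro z hzs
    have hw : ‖(-z) - (z₀ : ℂ)‖ ≤ η := by
      have := hspecB hzs; simpa using this
    obtain ⟨h1, h2⟩ := disk_lemma hη hz hφ0 hφ2 hw
    constructor
    · calc ‖z + (φ : ℂ)‖ = ‖(-z) - (φ : ℂ)‖ := by rw [← norm_neg]; congr 1; ring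
        _ ≤ ν * ‖(-z) + (φ : ℂ)‖ := h1
        _ = ν * ‖z - (φ : ℂ)‖ := by rw [← norm_neg ((-z) + (φ : ℂ))]; congr 2; ring
    · calc δ ≤ ‖(-z) + (φ : ℂ)‖ := h2
        _ = ‖z - (φ : ℂ)‖ := by rw [← norm_neg ((-z) + (φ : ℂ))]; congr 1; ring
  clear_value δ q ν
  have hAne : ∀ z ∈ spectrum ℂ A, z + (φ : ℂ) ≠ 0 := fun z hz h0 => by
    have := (hAdisk z hz).2; rw [h0, norm_zero] at this; linarith
  have hBne : ∀ z ∈ spectrum ℂ B, z - (φ : ℂ) ≠ 0 := fun z hz h0 => by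
    have := (hBdisk z hz).2; rw [h0, norm_zero] at this; linarith
  -- continuity facts
  have hcont_addA : ContinuousOn (fun z : ℂ => z + (φ : ℂ)) (spectrum ℂ A) :=
    (continuous_id.add continuous_const).continuousOn
  have hcont_subB : ContinuousOn (fun z : ℂ => z - (φ : ℂ)) (spectrum ℂ B) :=
    (continuous_id.sub continuous_const).continuousOn
  have hcontC : ContinuousOn (fun z : ℂ => (z - (φ : ℂ)) / (z + (φ : ℂ))) (spectrum ℂ A) :=
    ContinuousOn.div (continuous_id.sub continuous_const).continuousOn hcont_addA hAne
  have hcontD : ContinuousOn (fun z : ℂ => (z + (φ : ℂ)) / (z - (φ : ℂ))) (spectrum ℂ B) :=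
    ContinuousOn.div (continuous_id.add continuous_const).continuousOn hcont_subB hBne
  have hcontP : ContinuousOn (fun z : ℂ => (-(2 * (φ : ℂ))) / (z + (φ : ℂ))) (spectrum ℂ A) :=
    ContinuousOn.div continuousOn_const hcont_addA hAne
  have hcontQ : ContinuousOn (fun z : ℂ => (z - (φ : ℂ))⁻¹) (spectrum ℂ B) :=
    ContinuousOn.inv₀ hcont_subB hBne
  -- the matrices
  set C : Matrix (Fin m) (Fin m) ℂ :=
    cfc (fun z : ℂ => (z - (φ : ℂ)) / (z + (φ : ℂ))) A with hCdef
  set D : Matrix (Fin n) (Fin n) ℂ :=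
    cfc (fun z : ℂ => (z + (φ : ℂ)) / (z - (φ : ℂ))) B with hDdef
  set P : Matrix (Fin m) (Fin m) ℂ :=
    cfc (fun z : ℂ => (-(2 * (φ : ℂ))) / (z + (φ : ℂ))) A with hPdef
  set Q : Matrix (Fin n) (Fin n) ℂ :=
    cfc (fun z : ℂ => (z - (φ : ℂ))⁻¹) B with hQdef
  set Ap : Matrix (Fin m) (Fin m) ℂ := A + algebraMap ℂ (Matrix (Fin m) (Fin m) ℂ) (φ : ℂ)
    with hApdef
  set Am : Matrix (Fin m) (Fin m) ℂ := A - algebraMap ℂ (Matrix (Fin m) (Fin m) ℂ) (φ : ℂ)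
    with hAmdef
  set Bp : Matrix (Fin n) (Fin n) ℂ := B + algebraMap ℂ (Matrix (Fin n) (Fin n) ℂ) (φ : ℂ)
    with hBpdef
  set Bm : Matrix (Fin n) (Fin n) ℂ := B - algebraMap ℂ (Matrix (Fin n) (Fin n) ℂ) (φ : ℂ)
    with hBmdef
  -- algebraic identities via cfc
  have hApC : Ap * C = Am := by
    rw [hApdef, hCdef, ← cfc_add_scalar A (φ : ℂ),
      ← cfc_mul (fun z : ℂ => z + (φ : ℂ)) _ A hcont_addA hcontC,
      cfc_congr (fun z hz => by field_simp [hAne z hz] :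
        (spectrum ℂ A).EqOn (fun z : ℂ => (z + (φ : ℂ)) * ((z - (φ : ℂ)) / (z + (φ : ℂ))))
          (fun z : ℂ => z - (φ : ℂ))),
      cfc_sub_scalar A (φ : ℂ), hAmdef]
  have hDBm : D * Bm = Bp := by
    rw [hBmdef, hDdef, ← cfc_sub_scalar B (φ : ℂ),
      ← cfc_mul _ (fun z : ℂ => z - (φ : ℂ)) B hcontD hcont_subB,
      cfc_congr (fun z hz => by field_simp [hBne z hz] :
        (spectrum ℂ B).EqOn (fun z : ℂ => ((z + (φ : ℂ)) / (z - (φ : ℂ))) * (z - (φ : ℂ)))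
          (fun z : ℂ => z + (φ : ℂ))),
      cfc_add_scalar B (φ : ℂ), hBpdef]
  have hApP : Ap * P = algebraMap ℂ (Matrix (Fin m) (Fin m) ℂ) (-(2 * (φ : ℂ))) := by
    rw [hApdef, hPdef, ← cfc_add_scalar A (φ : ℂ),
      ← cfc_mul (fun z : ℂ => z + (φ : ℂ)) _ A hcont_addA hcontP,
      cfc_congr (fun z hz => by field_simp [hAne z hz] :
        (spectrum ℂ A).EqOn
          (fun z : ℂ => (z + (φ : ℂ)) * ((-(2 * (φ : ℂ))) / (z + (φ : ℂ))))
          (fun _ : ℂ => -(2 * (φ : ℂ)))),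
      cfc_const _ A]
  have hQBm : Q * Bm = 1 := by
    rw [hBmdef, hQdef, ← cfc_sub_scalar B (φ : ℂ),
      ← cfc_mul _ (fun z : ℂ => z - (φ : ℂ)) B hcontQ hcont_subB,
      cfc_congr (fun z hz => by field_simp [hBne z hz] :
        (spectrum ℂ B).EqOn (fun z : ℂ => (z - (φ : ℂ))⁻¹ * (z - (φ : ℂ)))
          (fun _ : ℂ => (1 : ℂ))),
      cfc_const _ B, map_one]
  -- invertibility
  have hUAp : IsUnit Ap := by
    have h1 : (-(φ : ℂ)) ∉ spectrum ℂ A := fun hmem => hAne _ hmem (by ring)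
    have h2 := spectrum.notMem_iff.mp h1
    have h3 : Ap = -(algebraMap ℂ (Matrix (Fin m) (Fin m) ℂ) (-(φ : ℂ)) - A) := by
      rw [map_neg, hApdef]; abel
    rw [h3]; exact h2.neg
  have hUBm : IsUnit Bm := by
    have h1 : ((φ : ℂ)) ∉ spectrum ℂ B := fun hmem => hBne _ hmem (by ring)
    have h2 := spectrum.notMem_iff.mp h1
    have h3 : Bm = -(algebraMap ℂ (Matrix (Fin n) (Fin n) ℂ) ((φ : ℂ)) - B) := by
      rw [hBmdef]; abel
    rw [h3]; exact h2.neg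
  -- the key Sylvester identity
  have hKey : X - C * X * D = P * F * Q := by
    apply mat_cancel hUAp hUBm
    have e1 : Ap * (C * X * D) * Bm = (Ap * C) * X * (D * Bm) := by
      simp only [Matrix.mul_assoc]
    have e2 : Ap * (P * F * Q) * Bm = (Ap * P) * F * (Q * Bm) := by
      simp only [Matrix.mul_assoc]
    have e3 : algebraMap ℂ (Matrix (Fin m) (Fin m) ℂ) (-(2 * (φ : ℂ))) * F
        = (-(2 * (φ : ℂ))) • F := by
      rw [Algebra.algebraMap_eq_smul_one, Matrix.smul_mul, Matrix.one_mul]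
    have eL : Ap * (X - C * X * D) * Bm = Ap * X * Bm - Am * X * Bp := by
      rw [Matrix.mul_sub Ap X (C * X * D), Matrix.sub_mul (Ap * X) (Ap * (C * X * D)) Bm, e1,
        hApC, hDBm]
    rw [eL, e2, hApP, hQBm, Matrix.mul_one, e3, ← hX]
    simp only [hApdef, hAmdef, hBpdef, hBmdef, Algebra.algebraMap_eq_smul_one,
      Matrix.add_mul, Matrix.sub_mul, Matrix.mul_add, Matrix.mul_sub, Matrix.smul_mul,
      Matrix.mul_smul, Matrix.one_mul, Matrix.mul_one, smul_smul, smul_sub]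
    module
  -- norm bounds
  have hCnorm : ‖C‖ ≤ ν := by
    rw [hCdef]
    refine norm_cfc_le hν0 fun z hz => ?_
    rw [norm_div, div_le_iff₀ (lt_of_lt_of_le hδ (hAdisk z hz).2)]
    exact (hAdisk z hz).1
  have hDnorm : ‖D‖ ≤ ν := by
    rw [hDdef]
    refine norm_cfc_le hν0 fun z hz => ?_
    rw [norm_div, div_le_iff₀ (lt_of_lt_of_le hδ (hBdisk z hz).2)]
    exact (hBdisk z hz).1
  have hPnorm : ‖P‖ ≤ 2 * φ / δ := by
    rw [hPdef]
    refine norm_cfc_le (by positivity) fun z hz => ?_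
    have hn : ‖(-(2 * (φ : ℂ)))‖ = 2 * φ := by
      rw [norm_neg, show (2 * (φ : ℂ)) = ((2 * φ : ℝ) : ℂ) by push_cast; ring,
        Complex.norm_real, Real.norm_eq_abs, abs_of_pos (by linarith)]
    rw [norm_div, hn]
    apply div_le_div_of_nonneg_left (by linarith) hδ (hAdisk z hz).2
  have hQnorm : ‖Q‖ ≤ 1 / δ := by
    rw [hQdef]
    refine norm_cfc_le (by positivity) fun z hz => ?_
    rw [norm_inv, ← one_div]
    apply div_le_div_of_nonneg_left (by norm_num) hδ (hBdisk z hz).2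
  have hAnorm : ‖A‖ ≤ z₀ + η := by
    calc ‖A‖ = ‖cfc (fun z : ℂ => z) A‖ := by rw [cfc_id' ℂ A]
      _ ≤ z₀ + η := by
          refine norm_cfc_le (by linarith) fun z hz => ?_
          have hw : ‖z - (z₀ : ℂ)‖ ≤ η := by
            have := hspecA hz; simpa using this
          calc ‖z‖ = ‖(z - (z₀ : ℂ)) + (z₀ : ℂ)‖ := by ring_nf
            _ ≤ ‖z - (z₀ : ℂ)‖ + ‖((z₀ : ℝ) : ℂ)‖ := norm_add_le _ _
            _ ≤ η + z₀ := by
                rw [Complex.norm_real, Real.norm_eq_abs, abs_of_pos hz0]; linarith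
            _ = z₀ + η := by ring
  have hBnorm : ‖B‖ ≤ z₀ + η := by
    calc ‖B‖ = ‖cfc (fun z : ℂ => z) B‖ := by rw [cfc_id' ℂ B]
      _ ≤ z₀ + η := by
          refine norm_cfc_le (by linarith) fun z hz => ?_
          have hw : ‖(-z) - (z₀ : ℂ)‖ ≤ η := by
            have := hspecB hz; simpa using this
          calc ‖z‖ = ‖((-z) - (z₀ : ℂ)) + (z₀ : ℂ)‖ := by
                rw [← norm_neg]; congr 1; ring
            _ ≤ ‖(-z) - (z₀ : ℂ)‖ + ‖((z₀ : ℝ) : ℂ)‖ := norm_add_le _ _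
            _ ≤ η + z₀ := by
                rw [Complex.norm_real, Real.norm_eq_abs, abs_of_pos hz0]; linarith
            _ = z₀ + η := by ring
  have hFnorm : ‖F‖ ≤ 2 * (z₀ + η) * ‖X‖ := by
    rw [← hX]
    calc ‖A * X - X * B‖ ≤ ‖A * X‖ + ‖X * B‖ := norm_sub_le _ _
      _ ≤ ‖A‖ * ‖X‖ + ‖X‖ * ‖B‖ :=
          add_le_add (Matrix.l2_opNorm_mul A X) (Matrix.l2_opNorm_mul X B)
      _ ≤ (z₀ + η) * ‖X‖ + ‖X‖ * (z₀ + η) := by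
          have h0 : (0:ℝ) ≤ ‖X‖ := norm_nonneg _
          apply add_le_add (mul_le_mul_of_nonneg_right hAnorm h0)
            (mul_le_mul_of_nonneg_left hBnorm h0)
      _ = 2 * (z₀ + η) * ‖X‖ := by ring
  clear_value C D P Q Ap Am Bp Bm
  -- product norm bound
  have prodbound : ∀ (Y : Matrix (Fin m) (Fin n) ℂ) (i : ℕ),
      ‖C ^ i * Y * D ^ i‖ ≤ (μ₁⁻¹) ^ i * ‖Y‖ := by
    intro Y i
    induction i with
    | zero => simp [Matrix.one_mul, Matrix.mul_one]
    | succ i ih =>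
      have e : C ^ (i + 1) * Y * D ^ (i + 1) = C * (C ^ i * Y * D ^ i) * D := by
        rw [pow_succ' C, pow_succ D]
        simp only [Matrix.mul_assoc]
      rw [e]
      have h1 : ‖C * (C ^ i * Y * D ^ i) * D‖ ≤ ‖C * (C ^ i * Y * D ^ i)‖ * ‖D‖ :=
        Matrix.l2_opNorm_mul _ _
      have h2 : ‖C * (C ^ i * Y * D ^ i)‖ ≤ ‖C‖ * ‖C ^ i * Y * D ^ i‖ :=
        Matrix.l2_opNorm_mul _ _
      have h3 : ‖C * (C ^ i * Y * D ^ i)‖ * ‖D‖ ≤ (‖C‖ * ‖C ^ i * Y * D ^ i‖) * ‖D‖ :=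
        mul_le_mul_of_nonneg_right h2 (norm_nonneg _)
      have h4 : (‖C‖ * ‖C ^ i * Y * D ^ i‖) * ‖D‖ ≤ (ν * ((μ₁⁻¹) ^ i * ‖Y‖)) * ν := by
        have hm : 0 ≤ ‖C ^ i * Y * D ^ i‖ := norm_nonneg _
        have hist : ‖C‖ * ‖C ^ i * Y * D ^ i‖ ≤ ν * ((μ₁⁻¹) ^ i * ‖Y‖) :=
          mul_le_mul hCnorm ih hm hν0
        exact mul_le_mul hist hDnorm (norm_nonneg _) (by positivity)
      have h5 : (ν * ((μ₁⁻¹) ^ i * ‖Y‖)) * ν = (μ₁⁻¹) ^ (i + 1) * ‖Y‖ := by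
        rw [pow_succ, ← hν2]; ring
      linarith
  -- constants
  have hr1 : 1 ≤ (z₀ + η) / (z₀ - η) := by
    rw [le_div_iff₀ (by linarith)]; linarith
  have hμk0 : (0:ℝ) < μ₁ ^ k := pow_pos hμ0 k
  set cc : ℝ := 2 * φ / δ ^ 2 with hccdef
  have hcc0 : 0 ≤ cc := by rw [hccdef]; positivity
  clear_value cc
  -- main epsilon estimate
  have main : ∀ ε > (0:ℝ), singularValue X (t + 1) ≤
      ((μ₁ ^ k)⁻¹ * ‖X‖ + (k : ℝ) * cc * (K * (μ₁ ^ k)⁻¹ * ‖F‖)) + ε := by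
    intro ε hε
    set ε' : ℝ := ε / ((k : ℝ) * cc + 1) with hε'def
    have hε'0 : 0 < ε' := by rw [hε'def]; positivity
    clear_value ε'
    have hex : ∀ i : ℕ, ∃ N : Matrix (Fin m) (Fin n) ℂ, N.rank < (k - i) + 1 ∧
        ‖F - N‖ < singularValue F ((k - i) + 1) + ε' := fun i =>
      sv_exists F _ (Nat.succ_pos _) hε'0
    choose Nf hNfrank hNfnorm using hex
    set Nmat : Matrix (Fin m) (Fin n) ℂ :=
      ∑ i ∈ Finset.range k, C ^ i * (P * Nf i * Q) * D ^ i with hNmatdef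
    have hrank : Nmat.rank < t + 1 := by
      have h1 : Nmat.rank ≤ ∑ i ∈ Finset.range k, (k - i) := by
        refine matrank_sum_le _ _ _ fun i hi => ?_
        calc (C ^ i * (P * Nf i * Q) * D ^ i).rank
            ≤ (C ^ i * (P * Nf i * Q)).rank := Matrix.rank_mul_le_left _ _
          _ ≤ (P * Nf i * Q).rank := Matrix.rank_mul_le_right _ _
          _ ≤ (P * Nf i).rank := Matrix.rank_mul_le_left _ _
          _ ≤ (Nf i).rank := Matrix.rank_mul_le_right _ _
          _ ≤ k - i := by have := hNfrank i; omega
      rw [gauss_sum k, ← htk] at h1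
      omega
    have hsv := sv_le X Nmat hrank
    have hXdecomp : X - Nmat = C ^ k * X * D ^ k +
        ∑ i ∈ Finset.range k, C ^ i * (P * (F - Nf i) * Q) * D ^ i := by
      conv_lhs => rw [mat_telescope C D X k, hKey]
      rw [hNmatdef, add_sub_assoc, ← Finset.sum_sub_distrib]
      congr 1
      refine Finset.sum_congr rfl fun i _ => ?_
      simp only [Matrix.mul_sub, Matrix.sub_mul]
    have hterm : ∀ i ∈ Finset.range k, ‖C ^ i * (P * (F - Nf i) * Q) * D ^ i‖ ≤
        cc * (K * (μ₁ ^ k)⁻¹ * ‖F‖) + cc * ε' := by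
      intro i hi
      have hik : i < k := Finset.mem_range.mp hi
      have e1 : ‖C ^ i * (P * (F - Nf i) * Q) * D ^ i‖ ≤
          (μ₁⁻¹) ^ i * ‖P * (F - Nf i) * Q‖ := prodbound _ i
      have e2 : ‖P * (F - Nf i) * Q‖ ≤ (2 * φ / δ) * ‖F - Nf i‖ * (1 / δ) := by
        calc ‖P * (F - Nf i) * Q‖ ≤ ‖P * (F - Nf i)‖ * ‖Q‖ := Matrix.l2_opNorm_mul _ _
          _ ≤ (‖P‖ * ‖F - Nf i‖) * ‖Q‖ :=
              mul_le_mul_of_nonneg_right (Matrix.l2_opNorm_mul _ _) (norm_nonneg _)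
          _ ≤ ((2 * φ / δ) * ‖F - Nf i‖) * (1 / δ) := by
              have h0 : (0:ℝ) ≤ ‖F - Nf i‖ := norm_nonneg _
              exact mul_le_mul (mul_le_mul hPnorm le_rfl h0 (by positivity)) hQnorm
                (norm_nonneg _) (by positivity)
          _ = (2 * φ / δ) * ‖F - Nf i‖ * (1 / δ) := rfl
      have e3 : ‖F - Nf i‖ ≤ K * (μ₁ ^ (k - i))⁻¹ * ‖F‖ + ε' := by
        have h4 := (hNfnorm i).le
        have h5 := hF (k - i) (by omega)
        rw [specNorm_eq] at h5
        linarith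
      have e4 : (μ₁⁻¹) ^ i * (μ₁ ^ (k - i))⁻¹ = (μ₁ ^ k)⁻¹ := by
        rw [inv_pow, ← mul_inv, ← pow_add]
        have hik2 : i + (k - i) = k := by omega
        rw [hik2]
      have e5 : (μ₁⁻¹) ^ i ≤ 1 := pow_le_one₀ (by positivity) (inv_le_one_of_one_le₀ hμ1)
      have e6 : (0:ℝ) ≤ (μ₁⁻¹) ^ i := by positivity
      calc ‖C ^ i * (P * (F - Nf i) * Q) * D ^ i‖
          ≤ (μ₁⁻¹) ^ i * ((2 * φ / δ) * (K * (μ₁ ^ (k - i))⁻¹ * ‖F‖ + ε') * (1 / δ)) := by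
            refine e1.trans (mul_le_mul_of_nonneg_left (e2.trans ?_) e6)
            have h0 : (0:ℝ) ≤ 2 * φ / δ := by positivity
            have h1 : (0:ℝ) ≤ 1 / δ := by positivity
            exact mul_le_mul_of_nonneg_right
              (mul_le_mul_of_nonneg_left e3 h0) h1
        _ = cc * (K * ((μ₁⁻¹) ^ i * (μ₁ ^ (k - i))⁻¹) * ‖F‖) + ((μ₁⁻¹) ^ i * ε') * cc := by
            rw [hccdef]; ring
        _ ≤ cc * (K * (μ₁ ^ k)⁻¹ * ‖F‖) + cc * ε' := by
            rw [e4]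
            have h7 : ((μ₁⁻¹) ^ i * ε') * cc ≤ cc * ε' := by
              rw [mul_comm cc ε']
              exact mul_le_mul_of_nonneg_right
                (mul_le_mul_of_nonneg_right e5 hε'0.le |>.trans_eq (one_mul ε')) hcc0
            linarith
    have hnorm : ‖X - Nmat‖ ≤ (μ₁ ^ k)⁻¹ * ‖X‖ +
        (k : ℝ) * (cc * (K * (μ₁ ^ k)⁻¹ * ‖F‖) + cc * ε') := by
      rw [hXdecomp]
      calc ‖C ^ k * X * D ^ k + ∑ i ∈ Finset.range k, C ^ i * (P * (F - Nf i) * Q) * D ^ i‖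
          ≤ ‖C ^ k * X * D ^ k‖ +
            ‖∑ i ∈ Finset.range k, C ^ i * (P * (F - Nf i) * Q) * D ^ i‖ := norm_add_le _ _
        _ ≤ (μ₁⁻¹) ^ k * ‖X‖ +
            ∑ i ∈ Finset.range k, ‖C ^ i * (P * (F - Nf i) * Q) * D ^ i‖ :=
            add_le_add (prodbound X k) (norm_sum_le _ _)
        _ ≤ (μ₁ ^ k)⁻¹ * ‖X‖ + (k : ℝ) * (cc * (K * (μ₁ ^ k)⁻¹ * ‖F‖) + cc * ε') := by
            rw [inv_pow]
            refine add_le_add le_rfl ?_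
            calc ∑ i ∈ Finset.range k, ‖C ^ i * (P * (F - Nf i) * Q) * D ^ i‖
                ≤ ∑ _i ∈ Finset.range k, (cc * (K * (μ₁ ^ k)⁻¹ * ‖F‖) + cc * ε') :=
                  Finset.sum_le_sum hterm
              _ = (k : ℝ) * (cc * (K * (μ₁ ^ k)⁻¹ * ‖F‖) + cc * ε') := by
                  rw [Finset.sum_const, Finset.card_range, nsmul_eq_mul]
    have hεbound : (k : ℝ) * (cc * ε') ≤ ε := by
      rw [hε'def]
      have hd : (0:ℝ) < (k : ℝ) * cc + 1 := by positivity
      have h1 : (k : ℝ) * (cc * (ε / ((k : ℝ) * cc + 1))) = ((k : ℝ) * cc) * ε / ((k : ℝ) * cc + 1) := by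
        ring
      rw [h1, div_le_iff₀ hd]
      nlinarith [mul_nonneg (mul_nonneg (Nat.cast_nonneg k) hcc0) hε.le]
    calc singularValue X (t + 1) ≤ ‖X - Nmat‖ := hsv
      _ ≤ (μ₁ ^ k)⁻¹ * ‖X‖ + (k : ℝ) * (cc * (K * (μ₁ ^ k)⁻¹ * ‖F‖) + cc * ε') := hnorm
      _ ≤ ((μ₁ ^ k)⁻¹ * ‖X‖ + (k : ℝ) * cc * (K * (μ₁ ^ k)⁻¹ * ‖F‖)) + ε := by
          have expand : (k : ℝ) * (cc * (K * (μ₁ ^ k)⁻¹ * ‖F‖) + cc * ε')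
              = (k : ℝ) * cc * (K * (μ₁ ^ k)⁻¹ * ‖F‖) + (k : ℝ) * (cc * ε') := by ring
          linarith
  have hS0 : singularValue X (t + 1) ≤
      (μ₁ ^ k)⁻¹ * ‖X‖ + (k : ℝ) * cc * (K * (μ₁ ^ k)⁻¹ * ‖F‖) :=
    le_of_forall_pos_le_add main
  -- final numeric assembly
  have hcast : (2:ℝ) * (t:ℝ) = (k:ℝ) * ((k:ℝ) + 1) := by exact_mod_cast h2t
  have hkcast : (1:ℝ) ≤ (k:ℝ) := by exact_mod_cast hk1
  have hkle : (k : ℝ) ≤ (3/2) * Real.sqrt t := by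
    have h23 : ((2 * (k:ℝ)) / 3) ^ 2 ≤ (t : ℝ) := by nlinarith
    have h24 : (2 * (k:ℝ)) / 3 ≤ Real.sqrt t := by
      have := Real.sqrt_le_sqrt h23
      rwa [Real.sqrt_sq (by positivity)] at this
    linarith
  have hexpEq : μ₁ ^ (-(Real.sqrt (8 * (t : ℝ) + 1) - 1) / 2) = (μ₁ ^ k)⁻¹ := by
    have h8t : 8 * (t:ℝ) + 1 = (2 * (k:ℝ) + 1) ^ 2 := by linear_combination 4 * hcast
    rw [h8t, Real.sqrt_sq (by positivity)]
    rw [show (-(2 * (k:ℝ) + 1 - 1) / 2) = -(k:ℝ) by ring, Real.rpow_neg hμ0.le,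
      Real.rpow_natCast]
  rw [specNorm_eq, hexpEq]
  have hδ' : 0 < z₀ + φ - η := hδdef ▸ hδ
  have hdisc : cc * (2 * (z₀ + η)) ≤ (z₀ + η) / (z₀ - η) := by
    rw [hccdef, hδdef, div_mul_eq_mul_div, div_le_div_iff₀ (pow_pos hδ' 2) (by linarith)]
    nlinarith [mul_nonneg (show (0:ℝ) ≤ z₀ + η by linarith) (sq_nonneg (z₀ - η - φ))]
  have hXn : (0:ℝ) ≤ ‖X‖ := norm_nonneg X
  have hb2 : (k:ℝ) * cc * (K * (μ₁ ^ k)⁻¹ * ‖F‖) ≤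
      (k:ℝ) * K * ((z₀ + η) / (z₀ - η)) * (μ₁ ^ k)⁻¹ * ‖X‖ := by
    calc (k:ℝ) * cc * (K * (μ₁ ^ k)⁻¹ * ‖F‖)
        ≤ (k:ℝ) * cc * (K * (μ₁ ^ k)⁻¹ * (2 * (z₀ + η) * ‖X‖)) := by
          have h0 : (0:ℝ) ≤ (k:ℝ) * cc := by positivity
          have h1 : (0:ℝ) ≤ K * (μ₁ ^ k)⁻¹ := by positivity
          exact mul_le_mul_of_nonneg_left
            (mul_le_mul_of_nonneg_left hFnorm h1) h0
      _ = ((k:ℝ) * K * (μ₁ ^ k)⁻¹ * ‖X‖) * (cc * (2 * (z₀ + η))) := by ring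
      _ ≤ ((k:ℝ) * K * (μ₁ ^ k)⁻¹ * ‖X‖) * ((z₀ + η) / (z₀ - η)) := by
          apply mul_le_mul_of_nonneg_left hdisc (by positivity)
      _ = (k:ℝ) * K * ((z₀ + η) / (z₀ - η)) * (μ₁ ^ k)⁻¹ * ‖X‖ := by ring
  have hb1 : (μ₁ ^ k)⁻¹ * ‖X‖ ≤ K * ((z₀ + η) / (z₀ - η)) * (μ₁ ^ k)⁻¹ * ‖X‖ := by
    have h1 : 1 ≤ K * ((z₀ + η) / (z₀ - η)) := by nlinarith
    nlinarith [mul_nonneg (inv_pos.mpr hμk0).le hXn]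
  have hfinal1 : singularValue X (t + 1) ≤
      K * ((z₀ + η) / (z₀ - η)) * ((k:ℝ) + 1) * (μ₁ ^ k)⁻¹ * ‖X‖ := by
    have e : K * ((z₀ + η) / (z₀ - η)) * ((k:ℝ) + 1) * (μ₁ ^ k)⁻¹ * ‖X‖
        = K * ((z₀ + η) / (z₀ - η)) * (μ₁ ^ k)⁻¹ * ‖X‖ +
          (k:ℝ) * K * ((z₀ + η) / (z₀ - η)) * (μ₁ ^ k)⁻¹ * ‖X‖ := by ring
    linarith [hS0, hb1, hb2]
  refine hfinal1.trans ?_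
  have hKr : (0:ℝ) ≤ K * ((z₀ + η) / (z₀ - η)) := by positivity
  exact mul_le_mul_of_nonneg_right (mul_le_mul_of_nonneg_right
    (mul_le_mul_of_nonneg_left (by linarith [hkle]) hKr) (inv_pos.mpr hμk0).le) hXn
end

section
/- Singular value decay for the entrywise squared-modulus reciprocal Cauchy matrix: Let E = {z ∈ ℂ : |z − z₀| ≤ η} with z₀, η ∈ ℝ and 0 < η < z₀, let φ = √(z₀² − η²), and let μ₁ = (z₀ + φ)/(z₀ − φ). Let z_1, …, z_m ∈ E and w_1, …, w_n ∈ −E (m ≥ n), and let C̃ ∈ ℝ^{m×n} have entries C̃_{ij} = 1/|z_i − w_j|². Then for every triangular number t = k(k+1)/2 with 1 ≤ t < n, σ_{t+1}(C̃) ≤ ((z₀ + η)/(z₀ − η)) · ((3/2)√t + 1) · μ₁^{−(√(8t+1) − 1)/2} · ‖C̃‖₂. -/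
open Finset Matrix

/-- Tail bound for the truncated double geometric series. -/
lemma sq_cauchy_tail_bound (V : ℂ) (k : ℕ) (x : ℝ) (hV : ‖V‖ ≤ x) :
    ‖(starRingEnd ℂ) V ^ k +
        ∑ q ∈ Finset.range k, ((starRingEnd ℂ) V ^ q - (starRingEnd ℂ) V ^ (q + 1)) * V ^ (k - q)‖
      ≤ x ^ k * (1 + k * (1 + x)) := by
  have hx0 : 0 ≤ x := le_trans (norm_nonneg V) hV
  have hcn : ‖(starRingEnd ℂ) V‖ = ‖V‖ := RCLike.norm_conj _
  have hterm : ∀ q ∈ Finset.range k,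
      ‖((starRingEnd ℂ) V ^ q - (starRingEnd ℂ) V ^ (q + 1)) * V ^ (k - q)‖ ≤ x ^ k * (1 + x) := by
    intro q hq
    have hqk : q + (k - q) = k := Nat.add_sub_cancel' (le_of_lt (Finset.mem_range.mp hq))
    have h1 : ‖((starRingEnd ℂ) V ^ q - (starRingEnd ℂ) V ^ (q + 1)) * V ^ (k - q)‖
        ≤ (x ^ q + x ^ (q + 1)) * x ^ (k - q) := by
      rw [norm_mul]
      refine mul_le_mul ?_ ?_ (norm_nonneg _) (by positivity)
      · refine (norm_sub_le _ _).trans ?_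
        rw [norm_pow, norm_pow, hcn]
        exact add_le_add (pow_le_pow_left₀ (norm_nonneg _) hV q)
          (pow_le_pow_left₀ (norm_nonneg _) hV (q + 1))
      · rw [norm_pow]; exact pow_le_pow_left₀ (norm_nonneg _) hV _
    calc ‖((starRingEnd ℂ) V ^ q - (starRingEnd ℂ) V ^ (q + 1)) * V ^ (k - q)‖
        ≤ (x ^ q + x ^ (q + 1)) * x ^ (k - q) := h1
      _ = x ^ (q + (k - q)) + x ^ ((q + 1) + (k - q)) := by rw [pow_add, pow_add]; ring
      _ = x ^ k * (1 + x) := by rw [hqk, show q + 1 + (k - q) = k + 1 by omega, pow_succ]; ring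
  calc ‖(starRingEnd ℂ) V ^ k + ∑ q ∈ Finset.range k,
          ((starRingEnd ℂ) V ^ q - (starRingEnd ℂ) V ^ (q + 1)) * V ^ (k - q)‖
      ≤ ‖(starRingEnd ℂ) V ^ k‖ + ∑ q ∈ Finset.range k,
          ‖((starRingEnd ℂ) V ^ q - (starRingEnd ℂ) V ^ (q + 1)) * V ^ (k - q)‖ :=
        (norm_add_le _ _).trans (by gcongr; exact norm_sum_le _ _)
    _ ≤ x ^ k + ∑ _q ∈ Finset.range k, x ^ k * (1 + x) :=
        add_le_add (by rw [norm_pow, hcn]; exact pow_le_pow_left₀ (norm_nonneg _) hV _)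
          (Finset.sum_le_sum hterm)
    _ = x ^ k * (1 + k * (1 + x)) := by
        rw [Finset.sum_const, Finset.card_range, nsmul_eq_mul]; ring

/-- Telescoping identity for the truncated double geometric series. -/
lemma sq_cauchy_geom_tail (v w : ℂ) (k : ℕ) :
    (1 - v) * (1 - w) *
        (∑ q ∈ Finset.range k, (∑ p ∈ Finset.range (k - q), v ^ p) * w ^ q)
      = 1 - (w ^ k + ∑ q ∈ Finset.range k, (w ^ q - w ^ (q + 1)) * v ^ (k - q)) := by
  have geo : ∀ (x : ℂ) (N : ℕ), (1 - x) * ∑ p ∈ Finset.range N, x ^ p = 1 - x ^ N := by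
    intro x N
    have := geom_sum_mul x N
    linear_combination -this
  calc (1 - v) * (1 - w) * (∑ q ∈ Finset.range k, (∑ p ∈ Finset.range (k - q), v ^ p) * w ^ q)
      = ∑ q ∈ Finset.range k,
          ((1 - v) * ∑ p ∈ Finset.range (k - q), v ^ p) * ((1 - w) * w ^ q) := by
        rw [mul_assoc, Finset.mul_sum, Finset.mul_sum]
        exact Finset.sum_congr rfl fun q _ => by ring
    _ = ∑ q ∈ Finset.range k, (1 - v ^ (k - q)) * ((1 - w) * w ^ q) := by
        exact Finset.sum_congr rfl fun q _ => by rw [geo]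
    _ = ((1 - w) * ∑ q ∈ Finset.range k, w ^ q)
          - ∑ q ∈ Finset.range k, (w ^ q - w ^ (q + 1)) * v ^ (k - q) := by
        rw [Finset.mul_sum, ← Finset.sum_sub_distrib]
        exact Finset.sum_congr rfl fun q _ => by ring
    _ = 1 - (w ^ k + ∑ q ∈ Finset.range k, (w ^ q - w ^ (q + 1)) * v ^ (k - q)) := by
        rw [geo]; ring

lemma specNorm_nonneg {m n : ℕ} (M : Matrix (Fin m) (Fin n) ℂ) : 0 ≤ specNorm M :=
  norm_nonneg _

/-- Entrywise domination by a nonnegative real matrix bounds the spectral norm. -/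
lemma specNorm_le_of_entrywise {m n : ℕ} (A B : Matrix (Fin m) (Fin n) ℂ) (g : ℝ) (hg : 0 ≤ g)
    (b : Fin m → Fin n → ℝ) (hb : ∀ i j, 0 ≤ b i j) (hB : ∀ i j, B i j = (b i j : ℂ))
    (hAB : ∀ i j, ‖A i j‖ ≤ g * ‖B i j‖) : specNorm A ≤ g * specNorm B := by
  unfold specNorm
  refine ContinuousLinearMap.opNorm_le_bound _ (by positivity) fun x => ?_
  set y : EuclideanSpace ℂ (Fin n) := (WithLp.equiv 2 _).symm (fun j => (‖x j‖ : ℂ)) with hy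
  have hyj : ∀ j, y j = (‖x j‖ : ℂ) := fun j => rfl
  have hynorm : ‖y‖ = ‖x‖ := by
    rw [EuclideanSpace.norm_eq, EuclideanSpace.norm_eq]
    congr 1
    refine Finset.sum_congr rfl fun j _ => ?_
    rw [hyj]
    simp [Complex.norm_real]
  have hBnorm : ∀ i j, ‖B i j‖ = b i j := by
    intro i j; rw [hB]; simp [Complex.norm_real, abs_of_nonneg (hb i j)]
  have hcomp : ∀ i, ‖(A *ᵥ (WithLp.equiv 2 _) x) i‖ ≤ g * ‖(B *ᵥ (WithLp.equiv 2 _) y) i‖ := by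
    intro i
    have hBy : (B *ᵥ (WithLp.equiv 2 _) y) i = ((∑ j, b i j * ‖x j‖ : ℝ) : ℂ) := by
      simp only [Matrix.mulVec, dotProduct]
      push_cast
      refine Finset.sum_congr rfl fun j _ => ?_
      rw [hB]
      rfl
    have h3 : ‖(B *ᵥ (WithLp.equiv 2 _) y) i‖ = ∑ j, ‖B i j‖ * ‖x j‖ := by
      rw [hBy, Complex.norm_real, Real.norm_eq_abs, abs_of_nonneg (Finset.sum_nonneg fun j _ =>
        mul_nonneg (hb i j) (norm_nonneg _))]
      exact Finset.sum_congr rfl fun j _ => by rw [hBnorm]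
    have h1 : ‖(A *ᵥ (WithLp.equiv 2 _) x) i‖ ≤ ∑ j, ‖A i j‖ * ‖x j‖ := by
      simp only [Matrix.mulVec, dotProduct]
      refine (norm_sum_le _ _).trans (le_of_eq ?_)
      exact Finset.sum_congr rfl fun j _ => by rw [norm_mul]; rfl
    have h2 : ∑ j, ‖A i j‖ * ‖x j‖ ≤ g * ∑ j, ‖B i j‖ * ‖x j‖ := by
      rw [Finset.mul_sum]
      exact Finset.sum_le_sum fun j _ => by
        rw [← mul_assoc]
        exact mul_le_mul_of_nonneg_right (hAB i j) (norm_nonneg _)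
    rw [h3]; linarith
  have happ : ∀ (M : Matrix (Fin m) (Fin n) ℂ) (v : EuclideanSpace ℂ (Fin n)) (i : Fin m),
      (LinearMap.toContinuousLinearMap (Matrix.toEuclideanLin M) v) i
        = (M *ᵥ (WithLp.equiv 2 _) v) i := fun M v i => rfl
  have hnx : ‖LinearMap.toContinuousLinearMap (Matrix.toEuclideanLin A) x‖
      ≤ g * ‖LinearMap.toContinuousLinearMap (Matrix.toEuclideanLin B) y‖ := by
    rw [EuclideanSpace.norm_eq, EuclideanSpace.norm_eq]
    have hstep : (∑ i, ‖(LinearMap.toContinuousLinearMap (Matrix.toEuclideanLin A) x) i‖ ^ 2)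
        ≤ g ^ 2 * ∑ i, ‖(LinearMap.toContinuousLinearMap (Matrix.toEuclideanLin B) y) i‖ ^ 2 := by
      rw [Finset.mul_sum]
      refine Finset.sum_le_sum fun i _ => ?_
      rw [happ, happ]
      calc ‖(A *ᵥ (WithLp.equiv 2 _) x) i‖ ^ 2
          ≤ (g * ‖(B *ᵥ (WithLp.equiv 2 _) y) i‖) ^ 2 :=
            pow_le_pow_left₀ (norm_nonneg _) (hcomp i) 2
        _ = g ^ 2 * ‖(B *ᵥ (WithLp.equiv 2 _) y) i‖ ^ 2 := by ring
    calc Real.sqrt (∑ i, ‖(LinearMap.toContinuousLinearMap (Matrix.toEuclideanLin A) x) i‖ ^ 2)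
        ≤ Real.sqrt (g ^ 2 *
            ∑ i, ‖(LinearMap.toContinuousLinearMap (Matrix.toEuclideanLin B) y) i‖ ^ 2) :=
          Real.sqrt_le_sqrt hstep
      _ = g * Real.sqrt
            (∑ i, ‖(LinearMap.toContinuousLinearMap (Matrix.toEuclideanLin B) y) i‖ ^ 2) := by
          rw [Real.sqrt_mul (sq_nonneg g), Real.sqrt_sq hg]
  calc ‖LinearMap.toContinuousLinearMap (Matrix.toEuclideanLin A) x‖
      ≤ g * ‖LinearMap.toContinuousLinearMap (Matrix.toEuclideanLin B) y‖ := hnx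
    _ ≤ g * (‖LinearMap.toContinuousLinearMap (Matrix.toEuclideanLin B)‖ * ‖y‖) :=
        mul_le_mul_of_nonneg_left (ContinuousLinearMap.le_opNorm _ _) hg
    _ = g * ‖LinearMap.toContinuousLinearMap (Matrix.toEuclideanLin B)‖ * ‖x‖ := by
        rw [hynorm]; ring

lemma cauchy_mobius_identity (Z W F : ℂ) (hZ : Z + F ≠ 0) (hW : W - F ≠ 0) :
    (Z - W) * ((1 - (Z - F) / (Z + F)) * (1 - (W + F) / (W - F)))
      = 2 * F * (1 - (Z - F) / (Z + F) * ((W + F) / (W - F))) := by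
  field_simp
  ring

lemma sum_range_sub_eq (K : ℕ) : 2 * (∑ q ∈ Finset.range K, (K - q)) = K * (K + 1) := by
  induction K with
  | zero => simp
  | succ K ih =>
    rw [Finset.sum_range_succ' (fun q => K + 1 - q) K]
    simp only [Nat.succ_sub_succ_eq_sub, Nat.sub_zero]
    rw [Nat.mul_add, ih]
    ring

set_option maxHeartbeats 2000000 in
/-- **Singular value decay for the entrywise squared-modulus reciprocal Cauchy matrix.**
If `C̃_{ij} = 1/|zᵢ - wⱼ|²` with `zᵢ ∈ E = {z : |z - z₀| ≤ η}`, `wⱼ ∈ -E`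
(`0 < η < z₀`, `m ≥ n`), `φ = √(z₀² - η²)`, `μ₁ = (z₀ + φ)/(z₀ - φ)`, then for each
triangular number `t = k(k+1)/2` with `1 ≤ t < n`,
`σ_{t+1}(C̃) ≤ ((z₀+η)/(z₀-η)) ((3/2)√t + 1) μ₁^{-(√(8t+1)-1)/2} ‖C̃‖₂`. -/
theorem squared_modulus_cauchy_singular_values {m n : ℕ} (hmn : n ≤ m)
    (z₀ η : ℝ) (hη : 0 < η) (hz : η < z₀)
    (φ : ℝ) (hφ : φ = Real.sqrt (z₀ ^ 2 - η ^ 2))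
    (μ₁ : ℝ) (hμ : μ₁ = (z₀ + φ) / (z₀ - φ))
    (z : Fin m → ℂ) (w : Fin n → ℂ)
    (hzE : ∀ i, ‖z i - (z₀ : ℂ)‖ ≤ η)
    (hwE : ∀ j, ‖-(w j) - (z₀ : ℂ)‖ ≤ η)
    (Ct : Matrix (Fin m) (Fin n) ℂ)
    (hCt : ∀ i j, Ct i j = (((‖z i - w j‖ ^ 2)⁻¹ : ℝ) : ℂ))
    (k t : ℕ) (htk : t = k * (k + 1) / 2) (ht1 : 1 ≤ t) (htn : t < n) :
    singularValue Ct (t + 1) ≤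
      ((z₀ + η) / (z₀ - η)) * ((3 / 2) * Real.sqrt t + 1) *
        μ₁ ^ (-(Real.sqrt (8 * (t : ℝ) + 1) - 1) / 2) * specNorm Ct := by
  -- basic real facts
  have hz0 : 0 < z₀ := lt_trans hη hz
  have hφsq : φ ^ 2 = z₀ ^ 2 - η ^ 2 := by
    rw [hφ]; exact Real.sq_sqrt (by nlinarith)
  have hφ0 : 0 < φ := by rw [hφ]; exact Real.sqrt_pos.mpr (by nlinarith)
  have hφlt : φ < z₀ := by nlinarith
  have hφge : z₀ - η ≤ φ := by nlinarith
  obtain ⟨r, hrdef⟩ : ∃ r : ℝ, r = Real.sqrt ((z₀ - φ) / (z₀ + φ)) := ⟨_, rfl⟩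
  have hr0 : 0 ≤ r := hrdef ▸ Real.sqrt_nonneg _
  have hrsq : r ^ 2 = (z₀ - φ) / (z₀ + φ) := by
    rw [hrdef]; exact Real.sq_sqrt (div_nonneg (by linarith) (by linarith))
  have hrsq0 : 0 ≤ r ^ 2 := sq_nonneg r
  -- complex setup
  obtain ⟨F, hF⟩ : ∃ F : ℂ, F = (φ : ℂ) := ⟨_, rfl⟩
  have hFne : F ≠ 0 := by rw [hF]; exact Complex.ofReal_ne_zero.mpr hφ0.ne'
  have hFre : F.re = φ := by rw [hF]; exact Complex.ofReal_re φ
  obtain ⟨s, hs⟩ : ∃ s : Fin m → ℂ, s = fun i => (z i - F) / (z i + F) := ⟨_, rfl⟩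
  obtain ⟨u, hu⟩ : ∃ u : Fin n → ℂ, u = fun j => (w j + F) / (w j - F) := ⟨_, rfl⟩
  have hrez : ∀ i, z₀ - η ≤ (z i).re := by
    intro i
    have h1 := (Complex.abs_re_le_norm (z i - (z₀ : ℂ))).trans (hzE i)
    rw [Complex.sub_re, Complex.ofReal_re] at h1
    have := abs_le.mp h1
    linarith [this.1]
  have hrew : ∀ j, (w j).re ≤ η - z₀ := by
    intro j
    have h1 := (Complex.abs_re_le_norm (-(w j) - (z₀ : ℂ))).trans (hwE j)
    rw [Complex.sub_re, Complex.neg_re, Complex.ofReal_re] at h1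
    have := abs_le.mp h1
    linarith [this.1]
  have hZF : ∀ i, z i + F ≠ 0 := by
    intro i hc
    have := congrArg Complex.re hc
    rw [Complex.add_re, hFre, Complex.zero_re] at this
    have := hrez i; linarith
  have hWF : ∀ j, w j - F ≠ 0 := by
    intro j hc
    have := congrArg Complex.re hc
    rw [Complex.sub_re, hFre, Complex.zero_re] at this
    have := hrew j; linarith
  have hzw : ∀ i j, z i - w j ≠ 0 := by
    intro i j hc
    have := congrArg Complex.re hc
    rw [Complex.sub_re, Complex.zero_re] at this
    have h1 := hrez i; have h2 := hrew j; linarith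
  -- Möbius disk bound
  have hmob : ∀ ζ : ℂ, ‖ζ - (z₀ : ℂ)‖ ≤ η → (0 : ℝ) < (ζ + F).re →
      ‖(ζ - F) / (ζ + F)‖ ≤ r := by
    intro ζ hζ hre
    have hne : ζ + F ≠ 0 := fun hc => by rw [hc, Complex.zero_re] at hre; linarith
    have habs : 0 < ‖ζ + F‖ := by
      rw [norm_pos_iff]; exact hne
    rw [norm_div, div_le_iff₀ habs]
    have hnsq : (ζ.re - z₀) ^ 2 + ζ.im ^ 2 ≤ η ^ 2 := by
      have h1 : ‖ζ - (z₀ : ℂ)‖ ^ 2 ≤ η ^ 2 :=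
        pow_le_pow_left₀ (norm_nonneg _) hζ 2
      rw [Complex.sq_norm, Complex.normSq_apply, Complex.sub_re, Complex.sub_im,
        Complex.ofReal_re, Complex.ofReal_im] at h1
      nlinarith [h1]
    have key : ((ζ.re - φ) ^ 2 + ζ.im ^ 2) * (z₀ + φ) ≤
        (z₀ - φ) * ((ζ.re + φ) ^ 2 + ζ.im ^ 2) := by
      nlinarith [mul_nonneg hφ0.le (sub_nonneg.mpr hnsq)]
    have hsq : ‖ζ - F‖ ^ 2 ≤ (r * ‖ζ + F‖) ^ 2 := by
      rw [mul_pow, hrsq, Complex.sq_norm, Complex.sq_norm, Complex.normSq_apply,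
        Complex.normSq_apply, Complex.sub_re, Complex.sub_im, Complex.add_re, Complex.add_im,
        hF, Complex.ofReal_re, Complex.ofReal_im]
      rw [div_mul_eq_mul_div, le_div_iff₀ (by linarith)]
      nlinarith [key]
    calc ‖ζ - F‖ = Real.sqrt (‖ζ - F‖ ^ 2) :=
          (Real.sqrt_sq (norm_nonneg _)).symm
      _ ≤ Real.sqrt ((r * ‖ζ + F‖) ^ 2) := Real.sqrt_le_sqrt hsq
      _ = r * ‖ζ + F‖ :=
          Real.sqrt_sq (mul_nonneg hr0 (norm_nonneg _))
  have hS : ∀ i, ‖s i‖ ≤ r := by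
    intro i
    simp only [hs]
    refine hmob (z i) (hzE i) ?_
    rw [Complex.add_re, hFre]
    have := hrez i; linarith
  have hU : ∀ j, ‖u j‖ ≤ r := by
    intro j
    have he : (-(w j) - F) / (-(w j) + F) = (w j + F) / (w j - F) := by
      rw [show -(w j) - F = -(w j + F) by ring, show -(w j) + F = -(w j - F) by ring,
        neg_div_neg_eq]
    have h2 := hmob (-(w j)) (hwE j) ?_
    · rw [he] at h2; simp only [hu]; exact h2
    · rw [Complex.add_re, Complex.neg_re, hFre]
      have := hrew j; linarith
  -- the rank-t approximant
  obtain ⟨P, hP⟩ : ∃ P : Matrix (Fin m) ((q : Fin k) × Fin (k - (q : ℕ))) ℂ,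
      P = fun i c =>
        (1 - s i) * (1 - (starRingEnd ℂ) (s i)) * (s i) ^ (c.2 : ℕ) *
          ((starRingEnd ℂ) (s i)) ^ (c.1 : ℕ) / (4 * F ^ 2) := ⟨_, rfl⟩
  obtain ⟨Q, hQ⟩ : ∃ Q : Matrix ((q : Fin k) × Fin (k - (q : ℕ))) (Fin n) ℂ,
      Q = fun c j =>
        (1 - u j) * (1 - (starRingEnd ℂ) (u j)) * (u j) ^ (c.2 : ℕ) *
          ((starRingEnd ℂ) (u j)) ^ (c.1 : ℕ) := ⟨_, rfl⟩
  obtain ⟨N, hNdef⟩ : ∃ N : Matrix (Fin m) (Fin n) ℂ, N = P * Q := ⟨_, rfl⟩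
  have h2t : 2 * t = k * (k + 1) := by
    have := Nat.even_mul_succ_self k
    rw [Nat.even_iff] at this
    omega
  have hcard : Fintype.card ((q : Fin k) × Fin (k - (q : ℕ))) = t := by
    rw [Fintype.card_sigma]
    simp only [Fintype.card_fin]
    rw [Fin.sum_univ_eq_sum_range (fun q => k - q) k]
    have := sum_range_sub_eq k
    omega
  have hrankN : N.rank < t + 1 := by
    refine Nat.lt_succ_of_le ?_
    rw [hNdef]
    refine le_trans (Matrix.rank_mul_le_left P Q) ?_
    rw [← hcard]
    exact Matrix.rank_le_card_width P
  -- per-entry error identity and bound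
  have hkey : ∀ i j, ‖(Ct - N) i j‖ ≤ ((r ^ 2) ^ k * (1 + k * (1 + r ^ 2))) * ‖Ct i j‖ := by
    intro i j
    have hcm : (starRingEnd ℂ) (s i * u j) = (starRingEnd ℂ) (s i) * (starRingEnd ℂ) (u j) :=
      RingHom.map_mul _ _ _
    have hconjS : (starRingEnd ℂ) (s i) =
        ((starRingEnd ℂ) (z i) - F) / ((starRingEnd ℂ) (z i) + F) := by
      simp only [hs, hF]
      rw [map_div₀, map_sub, map_add, Complex.conj_ofReal]
    have hconjU : (starRingEnd ℂ) (u j) =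
        ((starRingEnd ℂ) (w j) + F) / ((starRingEnd ℂ) (w j) - F) := by
      simp only [hu, hF]
      rw [map_div₀, map_sub, map_add, Complex.conj_ofReal]
    have hZc : (starRingEnd ℂ) (z i) + F ≠ 0 := by
      have h1 : (starRingEnd ℂ) (z i + F) ≠ 0 := (map_ne_zero _).mpr (hZF i)
      rwa [map_add, hF, Complex.conj_ofReal, ← hF] at h1
    have hWc : (starRingEnd ℂ) (w j) - F ≠ 0 := by
      have h1 : (starRingEnd ℂ) (w j - F) ≠ 0 := (map_ne_zero _).mpr (hWF j)
      rwa [map_sub, hF, Complex.conj_ofReal, ← hF] at h1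
    have hzw1 : (z i - w j) * ((1 - s i) * (1 - u j)) = 2 * F * (1 - s i * u j) := by
      simp only [hs, hu]
      exact cauchy_mobius_identity _ _ _ (hZF i) (hWF j)
    have hzw2 : (starRingEnd ℂ) (z i - w j) *
        ((1 - (starRingEnd ℂ) (s i)) * (1 - (starRingEnd ℂ) (u j)))
          = 2 * F * (1 - (starRingEnd ℂ) (s i) * (starRingEnd ℂ) (u j)) := by
      rw [hconjS, hconjU, map_sub]
      exact cauchy_mobius_identity _ _ _ hZc hWc
    have h4 : ((1 - s i) * (1 - (starRingEnd ℂ) (s i)) * (1 - u j) *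
          (1 - (starRingEnd ℂ) (u j))) * ((z i - w j) * (starRingEnd ℂ) (z i - w j))
        = (4 * F ^ 2) * ((1 - s i * u j) * (1 - (starRingEnd ℂ) (s i * u j))) := by
      rw [hcm]
      linear_combination ((starRingEnd ℂ) (z i - w j) * (1 - (starRingEnd ℂ) (s i)) *
        (1 - (starRingEnd ℂ) (u j))) * hzw1 + (2 * F * (1 - s i * u j)) * hzw2
    have hprod_ne : (z i - w j) * (starRingEnd ℂ) (z i - w j) ≠ 0 :=
      mul_ne_zero (hzw i j) ((map_ne_zero _).mpr (hzw i j))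
    have hCt' : Ct i j = ((z i - w j) * (starRingEnd ℂ) (z i - w j))⁻¹ := by
      rw [hCt i j, Complex.sq_norm, Complex.ofReal_inv, ← Complex.mul_conj]
    have hF4 : (4 : ℂ) * F ^ 2 ≠ 0 := by
      simp [hFne]
    have hKc : (1 - s i) * (1 - (starRingEnd ℂ) (s i)) * (1 - u j) *
          (1 - (starRingEnd ℂ) (u j)) / (4 * F ^ 2)
        = Ct i j * ((1 - s i * u j) * (1 - (starRingEnd ℂ) (s i * u j))) := by
      rw [hCt', div_eq_iff hF4, inv_mul_eq_div, div_mul_eq_mul_div, eq_div_iff hprod_ne]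
      linear_combination h4
    have hNij : N i j = ((1 - s i) * (1 - (starRingEnd ℂ) (s i)) * (1 - u j) *
        (1 - (starRingEnd ℂ) (u j)) / (4 * F ^ 2)) *
        (∑ q ∈ Finset.range k, (∑ p ∈ Finset.range (k - q), (s i * u j) ^ p) *
          ((starRingEnd ℂ) (s i * u j)) ^ q) := by
      rw [hNdef, Matrix.mul_apply, ← Finset.univ_sigma_univ, Finset.sum_sigma]
      simp only [hP, hQ]
      calc ∑ q : Fin k, ∑ p : Fin (k - (q : ℕ)),
            ((1 - s i) * (1 - (starRingEnd ℂ) (s i)) * (s i) ^ (p : ℕ) *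
              ((starRingEnd ℂ) (s i)) ^ (q : ℕ) / (4 * F ^ 2)) *
            ((1 - u j) * (1 - (starRingEnd ℂ) (u j)) * (u j) ^ (p : ℕ) *
              ((starRingEnd ℂ) (u j)) ^ (q : ℕ))
          = ∑ q : Fin k, ∑ p ∈ Finset.range (k - (q : ℕ)),
              ((1 - s i) * (1 - (starRingEnd ℂ) (s i)) * (s i) ^ p *
                ((starRingEnd ℂ) (s i)) ^ (q : ℕ) / (4 * F ^ 2)) *
              ((1 - u j) * (1 - (starRingEnd ℂ) (u j)) * (u j) ^ p *
                ((starRingEnd ℂ) (u j)) ^ (q : ℕ)) := by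
            refine Finset.sum_congr rfl fun q _ => ?_
            exact Fin.sum_univ_eq_sum_range (fun p =>
              ((1 - s i) * (1 - (starRingEnd ℂ) (s i)) * (s i) ^ p *
                ((starRingEnd ℂ) (s i)) ^ (q : ℕ) / (4 * F ^ 2)) *
              ((1 - u j) * (1 - (starRingEnd ℂ) (u j)) * (u j) ^ p *
                ((starRingEnd ℂ) (u j)) ^ (q : ℕ))) _
        _ = ∑ q ∈ Finset.range k, ∑ p ∈ Finset.range (k - q),
              ((1 - s i) * (1 - (starRingEnd ℂ) (s i)) * (s i) ^ p *
                ((starRingEnd ℂ) (s i)) ^ q / (4 * F ^ 2)) *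
              ((1 - u j) * (1 - (starRingEnd ℂ) (u j)) * (u j) ^ p *
                ((starRingEnd ℂ) (u j)) ^ q) :=
            Fin.sum_univ_eq_sum_range (fun q => ∑ p ∈ Finset.range (k - q),
              ((1 - s i) * (1 - (starRingEnd ℂ) (s i)) * (s i) ^ p *
                ((starRingEnd ℂ) (s i)) ^ q / (4 * F ^ 2)) *
              ((1 - u j) * (1 - (starRingEnd ℂ) (u j)) * (u j) ^ p *
                ((starRingEnd ℂ) (u j)) ^ q)) k
        _ = _ := by
            rw [Finset.mul_sum]
            refine Finset.sum_congr rfl fun q _ => ?_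
            rw [Finset.sum_mul, Finset.mul_sum]
            refine Finset.sum_congr rfl fun p _ => ?_
            rw [hcm]
            ring
    have herr : Ct i j - N i j = Ct i j *
        (((starRingEnd ℂ) (s i * u j)) ^ k + ∑ q ∈ Finset.range k,
          (((starRingEnd ℂ) (s i * u j)) ^ q - ((starRingEnd ℂ) (s i * u j)) ^ (q + 1)) *
            (s i * u j) ^ (k - q)) := by
      rw [hNij, hKc]
      have hg := sq_cauchy_geom_tail (s i * u j) ((starRingEnd ℂ) (s i * u j)) k
      linear_combination (-(Ct i j)) * hg
    rw [Matrix.sub_apply, herr, norm_mul]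
    have hVr : ‖s i * u j‖ ≤ r ^ 2 := by
      rw [norm_mul, pow_two]
      exact mul_le_mul (hS i) (hU j) (norm_nonneg _) hr0
    have htail := sq_cauchy_tail_bound (s i * u j) k (r ^ 2) hVr
    calc ‖Ct i j‖ * ‖((starRingEnd ℂ) (s i * u j)) ^ k + ∑ q ∈ Finset.range k,
            (((starRingEnd ℂ) (s i * u j)) ^ q - ((starRingEnd ℂ) (s i * u j)) ^ (q + 1)) *
              (s i * u j) ^ (k - q)‖
        ≤ ‖Ct i j‖ * ((r ^ 2) ^ k * (1 + k * (1 + r ^ 2))) :=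
          mul_le_mul_of_nonneg_left htail (norm_nonneg _)
      _ = ((r ^ 2) ^ k * (1 + k * (1 + r ^ 2))) * ‖Ct i j‖ := mul_comm _ _
  -- spectral norm comparison
  have hg0 : 0 ≤ (r ^ 2) ^ k * (1 + k * (1 + r ^ 2)) := by positivity
  have hdom : specNorm (Ct - N) ≤ ((r ^ 2) ^ k * (1 + k * (1 + r ^ 2))) * specNorm Ct := by
    refine specNorm_le_of_entrywise (Ct - N) Ct _ hg0
      (fun i j => (‖z i - w j‖ ^ 2)⁻¹) (fun i j => by positivity)
      (fun i j => hCt i j) hkey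
  -- Eckart–Young step
  have hsv : singularValue Ct (t + 1) ≤ specNorm (Ct - N) := by
    unfold singularValue
    refine csInf_le ⟨0, ?_⟩ ⟨N, hrankN, rfl⟩
    rintro v ⟨N', _, rfl⟩
    exact specNorm_nonneg _
  -- constant comparison
  have hst0 : (0 : ℝ) ≤ Real.sqrt t := Real.sqrt_nonneg _
  have hk32 : (k : ℝ) ≤ 3 / 2 * Real.sqrt t := by
    have hc : 2 * (t : ℝ) = (k : ℝ) * ((k : ℝ) + 1) := by exact_mod_cast h2t
    have h1 : ((k : ℝ)) ^ 2 ≤ (3 / 2 * Real.sqrt t) ^ 2 := by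
      rw [mul_pow, Real.sq_sqrt (by positivity : (0 : ℝ) ≤ (t : ℝ))]
      nlinarith [Nat.cast_nonneg (α := ℝ) k]
    calc (k : ℝ) = Real.sqrt ((k : ℝ) ^ 2) := (Real.sqrt_sq (by positivity)).symm
      _ ≤ Real.sqrt ((3 / 2 * Real.sqrt t) ^ 2) := Real.sqrt_le_sqrt h1
      _ = 3 / 2 * Real.sqrt t := Real.sqrt_sq (by positivity)
  have hrho : 1 + r ^ 2 ≤ (z₀ + η) / (z₀ - η) := by
    rw [hrsq]
    have e : 1 + (z₀ - φ) / (z₀ + φ) = 2 * z₀ / (z₀ + φ) := by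
      field_simp
      ring
    rw [e, div_le_div_iff₀ (by linarith) (by linarith)]
    nlinarith
  have hconst : (1 : ℝ) + k * (1 + r ^ 2) ≤ (z₀ + η) / (z₀ - η) * (3 / 2 * Real.sqrt t + 1) := by
    have h1 : (1 : ℝ) + k * (1 + r ^ 2) ≤ (1 + r ^ 2) * (3 / 2 * Real.sqrt t + 1) := by
      nlinarith [mul_nonneg (by linarith : (0:ℝ) ≤ 1 + r ^ 2)
        (by linarith : (0:ℝ) ≤ 3 / 2 * Real.sqrt t - k)]
    have h2 : (1 + r ^ 2) * (3 / 2 * Real.sqrt t + 1)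
        ≤ (z₀ + η) / (z₀ - η) * (3 / 2 * Real.sqrt t + 1) :=
      mul_le_mul_of_nonneg_right hrho (by positivity)
    linarith
  have hμpos : 0 < μ₁ := by
    rw [hμ]; exact div_pos (by linarith) (by linarith)
  have hrpow : μ₁ ^ (-(Real.sqrt (8 * (t : ℝ) + 1) - 1) / 2) = (r ^ 2) ^ k := by
    have hc : 2 * (t : ℝ) = (k : ℝ) * ((k : ℝ) + 1) := by exact_mod_cast h2t
    have h8 : 8 * (t : ℝ) + 1 = (2 * (k : ℝ) + 1) ^ 2 := by linear_combination 4 * hc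
    have hsq8 : Real.sqrt (8 * (t : ℝ) + 1) = 2 * (k : ℝ) + 1 := by
      rw [h8, Real.sqrt_sq (by positivity)]
    have hexp : -(Real.sqrt (8 * (t : ℝ) + 1) - 1) / 2 = -(k : ℝ) := by
      rw [hsq8]; ring
    rw [hexp, Real.rpow_neg hμpos.le, Real.rpow_natCast]
    have hμr : μ₁ = (r ^ 2)⁻¹ := by rw [hμ, hrsq, inv_div]
    rw [hμr, inv_pow, inv_inv]
  have hspec0 : 0 ≤ specNorm Ct := specNorm_nonneg Ct
  calc singularValue Ct (t + 1) ≤ specNorm (Ct - N) := hsv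
    _ ≤ ((r ^ 2) ^ k * (1 + k * (1 + r ^ 2))) * specNorm Ct := hdom
    _ ≤ ((z₀ + η) / (z₀ - η) * (3 / 2 * Real.sqrt t + 1) * (r ^ 2) ^ k) * specNorm Ct := by
        refine mul_le_mul_of_nonneg_right ?_ hspec0
        calc (r ^ 2) ^ k * (1 + k * (1 + r ^ 2))
            ≤ (r ^ 2) ^ k * ((z₀ + η) / (z₀ - η) * (3 / 2 * Real.sqrt t + 1)) :=
              mul_le_mul_of_nonneg_left hconst (by positivity)
          _ = (z₀ + η) / (z₀ - η) * (3 / 2 * Real.sqrt t + 1) * (r ^ 2) ^ k := by ring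
    _ = ((z₀ + η) / (z₀ - η)) * ((3 / 2) * Real.sqrt t + 1) *
          μ₁ ^ (-(Real.sqrt (8 * (t : ℝ) + 1) - 1) / 2) * specNorm Ct := by
        rw [hrpow]
end
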